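/- Let q be a prime power and k, l positive integers with k ≤ q-2 and l ≤ q-2, and set m = max{k,l}. Let P^△_{k,l} = conv{(0,0),(k,0),(0,l)}. Then the minimum distance of the toric code C_{P^△_{k,l}} over 𝔽_q equals (q-1)² − m(q-1). -/

import Mathlib

/-- Embed a lattice point of `ℤ²` into the real plane. -/
def toRealPt (p : ℤ × ℤ) : ℝ × ℝ := ((p.1 : ℝ), (p.2 : ℝ))

/-- The lattice points of the (possibly degenerate) convex lattice polygon spanned by a
finite set `V` of points of `ℤ²`, i.e. the points of `ℤ²` lying in the convex hull of `V`. -/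
def latticePts (V : Finset (ℤ × ℤ)) : Set (ℤ × ℤ) :=
  {p | toRealPt p ∈ convexHull ℝ (toRealPt '' (V : Set (ℤ × ℤ)))}

/-- The integer affine map `T(x) = Mx + v` on `ℤ²`. -/
def affMap (M : Matrix (Fin 2) (Fin 2) ℤ) (v : ℤ × ℤ) (p : ℤ × ℤ) : ℤ × ℤ :=
  (M 0 0 * p.1 + M 0 1 * p.2 + v.1, M 1 0 * p.1 + M 1 1 * p.2 + v.2)

/-- Two subsets of `ℤ²` are lattice equivalent if some affine map `T(x) = Mx + v`,
with `M ∈ GL(2,ℤ)` and `v ∈ ℤ²`, maps the first bijectively onto the second. -/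
def LatticeEquiv (S S' : Set (ℤ × ℤ)) : Prop :=
  ∃ (M : Matrix (Fin 2) (Fin 2) ℤ) (v : ℤ × ℤ),
    IsUnit M.det ∧ Set.BijOn (affMap M v) S S'

/-- Evaluation of the Laurent monomial `x^{m₁} y^{m₂}` at a point of the torus `(F*)²`. -/
def evalMonomial {F : Type*} [Field F] (m : ℤ × ℤ) (t : Fˣ × Fˣ) : F :=
  ((t.1 ^ m.1 : Fˣ) : F) * ((t.2 ^ m.2 : Fˣ) : F)

/-- The toric code over `F` associated to a set `S ⊆ ℤ²` of exponent vectors: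
the span of the evaluation vectors of the monomials `x^{m₁} y^{m₂}`, `m ∈ S`. -/
def toricCode (F : Type*) [Field F] (S : Set (ℤ × ℤ)) :
    Submodule F ((Fˣ × Fˣ) → F) :=
  Submodule.span F ((fun m => evalMonomial m) '' S)

/-- The Hamming weight of a word: the number of nonzero coordinates. -/
noncomputable def hammingWt {X F : Type*} [Zero F] (c : X → F) : ℕ :=
  Set.ncard {x | c x ≠ 0}

/-- The minimum distance of a linear code: the least Hamming weight of a nonzero codeword. -/
noncomputable def minDist {F X : Type*} [Field F] (C : Submodule F (X → F)) : ℕ :=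
  sInf {w | ∃ c ∈ C, c ≠ 0 ∧ hammingWt c = w}

/-- Monomial equivalence of linear codes inside `F^X`. -/
def MonomiallyEquiv {F X : Type*} [Field F] (C₁ C₂ : Submodule F (X → F)) : Prop :=
  ∃ (π : Equiv.Perm X) (d : X → Fˣ),
    (C₂ : Set (X → F)) = (fun c x => (d x : F) * c (π x)) '' (C₁ : Set (X → F))

/-- The vertex sets of the fourteen polygons `P₆⁽ⁱ⁾`, `i = 1, …, 14`. -/
def P6 : ℕ → Finset (ℤ × ℤ)
  | 1 => {(0,0),(5,0)}
  | 2 => {(0,0),(4,0),(0,1)}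
  | 3 => {(0,0),(3,0),(1,1),(0,1)}
  | 4 => {(0,-1),(3,0),(0,1)}
  | 5 => {(-1,-1),(3,0),(0,1)}
  | 6 => {(0,0),(1,0),(3,3),(0,1)}
  | 7 => {(0,0),(0,1),(3,0),(3,-1)}
  | 8 => {(-1,0),(0,1),(2,0),(0,-1)}
  | 9 => {(0,-1),(2,0),(1,1),(0,1)}
  | 10 => {(0,-1),(2,0),(-1,2)}
  | 11 => {(-1,-1),(1,0),(1,1),(0,2)}
  | 12 => {(-1,0),(0,-1),(1,0),(1,1),(0,1)}
  | 13 => {(0,0),(2,0),(0,2)}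
  | 14 => {(0,0),(2,0),(2,1),(0,1)}
  | _ => ∅

/-! ### Auxiliary lemmas -/

lemma ncard_setOf_prod {α β : Type*} [Fintype α] [Fintype β] (p : α → β → Prop) :
    {x : α × β | p x.1 x.2}.ncard = ∑ a : α, {b : β | p a b}.ncard := by
  classical
  have e : {x : α × β | p x.1 x.2} ≃ Σ a : α, {b : β | p a b} :=
    Equiv.subtypeProdEquivSigmaSubtype p
  rw [← Nat.card_coe_set_eq, Nat.card_congr e]
  simp only [Nat.card_eq_fintype_card, Fintype.card_sigma]
  exact Finset.sum_congr rfl fun a _ => by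
    rw [← Nat.card_coe_set_eq, Nat.card_eq_fintype_card]

lemma ncard_units_eval_zero_le {F : Type*} [Field F] [Fintype F] (g : Polynomial F)
    (hg : g ≠ 0) : {t : Fˣ | g.eval ↑t = 0}.ncard ≤ g.natDegree := by
  classical
  have hinj : Function.Injective (fun t : Fˣ => (t : F)) := Units.val_injective
  calc {t : Fˣ | g.eval ↑t = 0}.ncard
      = ((fun t : Fˣ => (t : F)) '' {t : Fˣ | g.eval ↑t = 0}).ncard :=
        (Set.ncard_image_of_injective _ hinj).symm
    _ ≤ (↑g.roots.toFinset : Set F).ncard := by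
        apply Set.ncard_le_ncard
        · rintro x ⟨t, ht, rfl⟩
          simp only [Finset.coe_sort_coe, Multiset.mem_toFinset, Finset.mem_coe]
          rw [Polynomial.mem_roots hg]
          exact ht
        · exact (g.roots.toFinset : Set F).toFinite
    _ = g.roots.toFinset.card := Set.ncard_coe_finset _
    _ ≤ Multiset.card g.roots := g.roots.toFinset_card_le
    _ ≤ g.natDegree := g.card_roots'

lemma ncard_units_eval_ne_zero {F : Type*} [Field F] [Fintype F] (g : Polynomial F)
    (hg : g ≠ 0) (d : ℕ) (hd : g.natDegree ≤ d) :
    Nat.card Fˣ - d ≤ {t : Fˣ | g.eval ↑t ≠ 0}.ncard := by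
  classical
  have h0 : {t : Fˣ | g.eval ↑t = 0}.ncard + {t : Fˣ | g.eval ↑t = 0}ᶜ.ncard
      = Nat.card Fˣ := Set.ncard_add_ncard_compl _
  have h1 : {t : Fˣ | g.eval ↑t = 0}ᶜ = {t : Fˣ | g.eval ↑t ≠ 0} := by
    ext t; simp
  have h2 := (ncard_units_eval_zero_le g hg).trans hd
  rw [h1] at h0
  omega

lemma arith_key (Q k l a d : ℕ) (h1 : l*a + k*d ≤ k*l) (hd : d ≤ l)
    (hkQ : k < Q) (hlQ : l < Q) (hl : 0 < l) :
    Q*Q - (max k l)*Q ≤ (Q - a)*(Q - d) := by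
  have ha : a ≤ k := by nlinarith
  have haQ : a ≤ Q := by omega
  have hdQ : d ≤ Q := by omega
  have hmQ : (max k l)*Q ≤ Q*Q := Nat.mul_le_mul (by omega) le_rfl
  zify [haQ, hdQ, hmQ]
  rcases le_total k l with h | h
  · rw [max_eq_right (show (k:ℤ) ≤ (l:ℤ) by exact_mod_cast h)]
    have h2 : (l:ℤ)*a + k*d ≤ k*l := by exact_mod_cast h1
    nlinarith [mul_nonneg (Int.natCast_nonneg a) (Int.natCast_nonneg d),
      mul_nonneg (sub_nonneg.2 (show (d:ℤ) ≤ l by exact_mod_cast hd))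
        (sub_nonneg.2 (show (k:ℤ) ≤ l by exact_mod_cast h)),
      (show (0:ℤ) < l by exact_mod_cast hl), (show (l:ℤ) < Q by exact_mod_cast hlQ)]
  · rw [max_eq_left (show (l:ℤ) ≤ (k:ℤ) by exact_mod_cast h)]
    have h2 : (l:ℤ)*a + k*d ≤ k*l := by exact_mod_cast h1
    nlinarith [mul_nonneg (Int.natCast_nonneg a) (Int.natCast_nonneg d),
      mul_nonneg (Int.natCast_nonneg d)
        (sub_nonneg.2 (show (l:ℤ) ≤ k by exact_mod_cast h)),
      (show (0:ℤ) < l by exact_mod_cast hl), (show (k:ℤ) < Q by exact_mod_cast hkQ)]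

lemma tri_latticePts_subset (k l : ℕ) (hk : 0 < k) (hl : 0 < l) :
    ∀ p ∈ latticePts {((0:ℤ),(0:ℤ)), ((k:ℤ),0), (0,(l:ℤ))},
      0 ≤ p.1 ∧ 0 ≤ p.2 ∧ (l:ℤ) * p.1 + (k:ℤ) * p.2 ≤ (k:ℤ) * l := by
  intro p hp
  have hL1 : IsLinearMap ℝ (fun x : ℝ × ℝ => x.1) := ⟨fun a b => rfl, fun c a => rfl⟩
  have hL2 : IsLinearMap ℝ (fun x : ℝ × ℝ => x.2) := ⟨fun a b => rfl, fun c a => rfl⟩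
  have hL3 : IsLinearMap ℝ (fun x : ℝ × ℝ => (l:ℝ) * x.1 + (k:ℝ) * x.2) := by
    constructor
    · intro a b; simp [Prod.fst_add, Prod.snd_add]; ring
    · intro c a; simp [Prod.smul_fst, Prod.smul_snd, smul_eq_mul]; ring
  set H : Set (ℝ × ℝ) :=
    {x | 0 ≤ x.1} ∩ ({x | 0 ≤ x.2} ∩ {x | (l:ℝ) * x.1 + (k:ℝ) * x.2 ≤ (k:ℝ) * l}) with hH
  have hconv : Convex ℝ H :=
    (convex_halfSpace_ge hL1 0).inter
      ((convex_halfSpace_ge hL2 0).inter (convex_halfSpace_le hL3 _))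
  have hVert : toRealPt '' (({((0:ℤ),(0:ℤ)), ((k:ℤ),0), (0,(l:ℤ))} : Finset (ℤ × ℤ)) : Set (ℤ × ℤ)) ⊆ H := by
    intro x hx
    simp only [Finset.coe_insert, Finset.coe_singleton, Set.image_insert_eq,
      Set.image_singleton, Set.mem_insert_iff, Set.mem_singleton_iff] at hx
    rcases hx with rfl | rfl | rfl <;>
      refine ⟨by simp [toRealPt], by simp [toRealPt], ?_⟩ <;>
      simp [toRealPt, mul_comm] <;> positivity
  have := convexHull_min hVert hconv hp
  obtain ⟨h1, h2, h3⟩ := this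
  have h1' : (0:ℝ) ≤ (p.1:ℝ) := h1
  have h2' : (0:ℝ) ≤ (p.2:ℝ) := h2
  have h3' : ((l:ℝ)) * (p.1:ℝ) + (k:ℝ) * (p.2:ℝ) ≤ (k:ℝ) * l := h3
  refine ⟨by exact_mod_cast h1', by exact_mod_cast h2', by exact_mod_cast h3'⟩

lemma axisX_mem (k l : ℕ) (hk : 0 < k) (i : ℕ) (hi : i ≤ k) :
    (((i:ℤ)), (0:ℤ)) ∈ latticePts {((0:ℤ),(0:ℤ)), ((k:ℤ),0), (0,(l:ℤ))} := by
  have h0 : toRealPt ((0:ℤ),(0:ℤ)) ∈ toRealPt '' (({((0:ℤ),(0:ℤ)), ((k:ℤ),0), (0,(l:ℤ))} : Finset (ℤ × ℤ)) : Set (ℤ × ℤ)) := ⟨_, by simp, rfl⟩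
  have h1 : toRealPt (((k:ℤ)),(0:ℤ)) ∈ toRealPt '' (({((0:ℤ),(0:ℤ)), ((k:ℤ),0), (0,(l:ℤ))} : Finset (ℤ × ℤ)) : Set (ℤ × ℤ)) := ⟨_, by simp, rfl⟩
  have hk' : (0:ℝ) < k := by exact_mod_cast hk
  have hseg : toRealPt ((i:ℤ), 0) ∈ segment ℝ (toRealPt ((0:ℤ),(0:ℤ))) (toRealPt (((k:ℤ)),(0:ℤ))) := by
    refine ⟨1 - (i:ℝ)/k, (i:ℝ)/k, ?_, ?_, by ring, ?_⟩
    · have : (i:ℝ) ≤ k := by exact_mod_cast hi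
      have := div_le_one_of_le₀ this hk'.le
      linarith
    · positivity
    · show _ = toRealPt ((i:ℤ), 0)
      simp only [toRealPt, Prod.smul_mk, smul_eq_mul, Prod.mk_add_mk, Prod.mk.injEq]
      constructor
      · field_simp; push_cast; ring
      · ring
  exact segment_subset_convexHull h0 h1 hseg

lemma axisY_mem (k l : ℕ) (hl : 0 < l) (i : ℕ) (hi : i ≤ l) :
    ((0:ℤ), ((i:ℤ))) ∈ latticePts {((0:ℤ),(0:ℤ)), ((k:ℤ),0), (0,(l:ℤ))} := by
  have h0 : toRealPt ((0:ℤ),(0:ℤ)) ∈ toRealPt '' (({((0:ℤ),(0:ℤ)), ((k:ℤ),0), (0,(l:ℤ))} : Finset (ℤ × ℤ)) : Set (ℤ × ℤ)) := ⟨_, by simp, rfl⟩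
  have h1 : toRealPt ((0:ℤ),((l:ℤ))) ∈ toRealPt '' (({((0:ℤ),(0:ℤ)), ((k:ℤ),0), (0,(l:ℤ))} : Finset (ℤ × ℤ)) : Set (ℤ × ℤ)) := ⟨_, by simp, rfl⟩
  have hl' : (0:ℝ) < l := by exact_mod_cast hl
  have hseg : toRealPt (0, (i:ℤ)) ∈ segment ℝ (toRealPt ((0:ℤ),(0:ℤ))) (toRealPt ((0:ℤ),((l:ℤ)))) := by
    refine ⟨1 - (i:ℝ)/l, (i:ℝ)/l, ?_, ?_, by ring, ?_⟩
    · have : (i:ℝ) ≤ l := by exact_mod_cast hi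
      have := div_le_one_of_le₀ this hl'.le
      linarith
    · positivity
    · show _ = toRealPt (0, (i:ℤ))
      simp only [toRealPt, Prod.smul_mk, smul_eq_mul, Prod.mk_add_mk, Prod.mk.injEq]
      constructor
      · ring
      · field_simp; push_cast; ring
  exact segment_subset_convexHull h0 h1 hseg

open Polynomial Finset in
/-- Key construction: a product of `m` distinct linear factors in one variable. -/
lemma exists_prod_linear (F : Type*) [Field F] [Fintype F] (q m : ℕ)
    (hF : Fintype.card F = q) (hm : m ≤ q - 2) (hq : 2 ≤ q) :
    ∃ f : Polynomial F, f ≠ 0 ∧ f.natDegree = m ∧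
      Set.ncard {s : Fˣ | f.eval ↑s ≠ 0} = q - 1 - m ∧
      Set.ncard {s : Fˣ | f.eval ↑s ≠ 0} ≠ 0 := by
  classical
  have hcard : m ≤ ((Finset.univ : Finset F).erase 0).card := by
    rw [Finset.card_erase_of_mem (Finset.mem_univ 0), Finset.card_univ, hF]
    omega
  obtain ⟨T, hT, hTcard⟩ := Finset.exists_subset_card_eq hcard
  set f : Polynomial F := ∏ α ∈ T, (X - C α) with hf
  have hfne : f ≠ 0 := by
    apply Finset.prod_ne_zero_iff.2
    intro α _; exact X_sub_C_ne_zero α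
  have hdeg : f.natDegree = m := by
    rw [hf, Polynomial.natDegree_prod _ _ (fun α _ => X_sub_C_ne_zero α)]
    simp [hTcard]
  have hZ : (Finset.univ.filter (fun s : Fˣ => f.eval ↑s = 0)).card = m := by
    rw [← hTcard]
    apply Finset.card_bij (fun (s : Fˣ) _ => (s : F))
    · intro s hs
      simp only [Finset.mem_filter, Finset.mem_univ, true_and] at hs
      rw [hf, Polynomial.eval_prod] at hs
      obtain ⟨α, hαT, hα⟩ := Finset.prod_eq_zero_iff.1 hs
      simp only [eval_sub, eval_X, eval_C, sub_eq_zero] at hα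
      rwa [hα]
    · intro s _ s' _ h; exact Units.ext h
    · intro α hαT
      have hα0 : α ≠ 0 := Finset.ne_of_mem_erase (hT hαT)
      refine ⟨Units.mk0 α hα0, ?_, rfl⟩
      simp only [Finset.mem_filter, Finset.mem_univ, true_and]
      rw [hf, Polynomial.eval_prod]
      exact Finset.prod_eq_zero hαT (by simp)
  have hcardU : Fintype.card Fˣ = q - 1 := by rw [Fintype.card_units, hF]
  have hN : (Finset.univ.filter (fun s : Fˣ => f.eval ↑s ≠ 0)).card = q - 1 - m := by
    have := Finset.card_filter_add_card_filter_not
      (s := (Finset.univ : Finset Fˣ)) (p := fun s : Fˣ => f.eval ↑s = 0)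
    rw [Finset.card_univ, hcardU, hZ] at this
    have h2 : (Finset.filter (fun s : Fˣ => ¬ f.eval ↑s = 0) Finset.univ).card = q - 1 - m := by
      omega
    convert h2 using 2
  have hsetN : Set.ncard {s : Fˣ | f.eval ↑s ≠ 0} = q - 1 - m := by
    rw [Set.ncard_eq_toFinset_card', Set.toFinset_setOf]
    exact hN
  refine ⟨f, hfne, hdeg, hsetN, ?_⟩
  rw [hsetN]; omega

open Polynomial Finset in
lemma exists_codeword_axis (F : Type*) [Field F] [Fintype F] (q m : ℕ)
    (hF : Fintype.card F = q) (hm : m ≤ q - 2) (hq : 2 ≤ q)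
    (S : Set (ℤ × ℤ)) (b : Bool)
    (hS : ∀ i : ℕ, i ≤ m → (if b then ((i:ℤ), (0:ℤ)) else ((0:ℤ), (i:ℤ))) ∈ S) :
    ∃ c ∈ toricCode F S, c ≠ 0 ∧ hammingWt c = (q - 1 - m) * (q - 1) := by
  classical
  obtain ⟨f, hfne, hdeg, hn, hne⟩ := exists_prod_linear F q m hF hm hq
  have hcardU : Nat.card Fˣ = q - 1 := by
    rw [Nat.card_eq_fintype_card, Fintype.card_units, hF]
  set c : (Fˣ × Fˣ) → F := fun st => f.eval ↑(if b then st.1 else st.2) with hc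
  have hmem : c ∈ toricCode F S := by
    have hrepr : c = ∑ i ∈ Finset.range (m+1),
        f.coeff i • evalMonomial (F := F) (if b then ((i:ℤ), (0:ℤ)) else ((0:ℤ), (i:ℤ))) := by
      funext st
      have hlt : f.natDegree < m + 1 := by omega
      rw [Finset.sum_apply]
      rw [hc]
      simp only
      rw [Polynomial.eval_eq_sum_range' hlt]
      apply Finset.sum_congr rfl
      intro i _
      cases b <;>
        simp [evalMonomial, smul_eq_mul, zpow_natCast, Units.val_pow_eq_pow_val]
    rw [hrepr]
    apply Submodule.sum_mem
    intro i hi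
    apply Submodule.smul_mem
    apply Submodule.subset_span
    exact ⟨_, hS i (Nat.lt_succ_iff.1 (Finset.mem_range.1 hi)), rfl⟩
  have hwt : hammingWt c = (q - 1 - m) * (q - 1) := by
    have hterm : ∀ s : Fˣ, {t : Fˣ | f.eval ↑s ≠ 0}.ncard
        = if f.eval (↑s : F) ≠ 0 then q - 1 else 0 := by
      intro s
      by_cases h : f.eval (↑s : F) ≠ 0
      · rw [if_pos h]
        have : {t : Fˣ | f.eval ↑s ≠ 0} = Set.univ := by ext t; simp [h]
        rw [this, Set.ncard_univ, hcardU]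
      · rw [if_neg h]
        have : {t : Fˣ | f.eval ↑s ≠ 0} = ∅ := by
          ext t; simp only [Set.mem_setOf_eq, Set.mem_empty_iff_false, iff_false, not_not]
          simpa using h
        rw [this, Set.ncard_empty]
    have hfilter : (Finset.univ.filter (fun s : Fˣ => f.eval ↑s ≠ 0)).card = q - 1 - m := by
      rw [← hn, Set.ncard_eq_toFinset_card', Set.toFinset_setOf]
    cases b
    · have h0 : hammingWt c = {x : Fˣ × Fˣ | f.eval ↑x.2 ≠ 0}.ncard := by
        unfold hammingWt; congr 1
      rw [h0, ncard_setOf_prod (fun (_ t : Fˣ) => f.eval ↑t ≠ 0),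
        Finset.sum_const, Finset.card_univ, smul_eq_mul, hn,
        ← Nat.card_eq_fintype_card, hcardU, Nat.mul_comm]
    · have h0 : hammingWt c = {x : Fˣ × Fˣ | f.eval ↑x.1 ≠ 0}.ncard := by
        unfold hammingWt; congr 1
      rw [h0, ncard_setOf_prod (fun (s _ : Fˣ) => f.eval ↑s ≠ 0)]
      calc ∑ s : Fˣ, {t : Fˣ | f.eval ↑s ≠ 0}.ncard
          = ∑ s : Fˣ, if f.eval (↑s : F) ≠ 0 then q - 1 else 0 :=
            Finset.sum_congr rfl fun s _ => hterm s
        _ = (Finset.univ.filter (fun s : Fˣ => f.eval ↑s ≠ 0)).card * (q - 1) := by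
            rw [Finset.sum_ite, Finset.sum_const, Finset.sum_const_zero, add_zero, smul_eq_mul]
        _ = (q - 1 - m) * (q - 1) := by rw [hfilter]
  have hc0 : c ≠ 0 := by
    intro h0
    apply hne
    have : {s : Fˣ | f.eval ↑s ≠ 0} = ∅ := by
      ext s
      simp only [Set.mem_setOf_eq, Set.mem_empty_iff_false, iff_false, not_not]
      have := congrFun h0 (s, s)
      cases b <;> simpa [hc] using this
    rw [this, Set.ncard_empty]
  exact ⟨c, hmem, hc0, hwt⟩

open Polynomial Finset in
/-- Lower bound on the weight of a nonzero codeword of the toric code of a set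
contained in the triangle with legs `k`, `l`. -/
lemma wt_lower {F : Type*} [Field F] [Fintype F] (q k l : ℕ) (hF : Fintype.card F = q)
    (hk : 0 < k) (hl : 0 < l) (hkq : k < q - 1) (hlq : l < q - 1)
    (S : Set (ℤ × ℤ))
    (hS : ∀ p ∈ S, 0 ≤ p.1 ∧ 0 ≤ p.2 ∧ (l:ℤ)*p.1 + (k:ℤ)*p.2 ≤ (k:ℤ)*(l:ℤ))
    (c : (Fˣ × Fˣ) → F) (hc : c ∈ toricCode F S) (hc0 : c ≠ 0) :
    (q-1)*(q-1) - (max k l)*(q-1) ≤ hammingWt c := by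
  classical
  obtain ⟨a, haS', harepr⟩ :=
    (Finsupp.mem_span_image_iff_linearCombination F).1 hc
  have haS : ↑a.support ⊆ S := (Finsupp.mem_supported F a).1 haS'
  set P : ℕ → Polynomial F :=
    fun j => ∑ i ∈ Finset.range (k+1), C (a ((i:ℤ), (j:ℤ))) * X^i with hP
  have hsupp : ∀ m ∈ a.support, ∃ i j : ℕ, i ≤ k ∧ j ≤ l ∧ m = ((i:ℤ), (j:ℤ)) := by
    intro m hm
    obtain ⟨h1, h2, h3⟩ := hS m (haS hm)
    have hik : m.1 ≤ (k:ℤ) := by nlinarith [h2, Int.natCast_pos.2 hl, Int.natCast_pos.2 hk]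
    have hjl : m.2 ≤ (l:ℤ) := by nlinarith [h1, Int.natCast_pos.2 hl, Int.natCast_pos.2 hk]
    refine ⟨m.1.toNat, m.2.toNat, ?_, ?_, ?_⟩
    · omega
    · omega
    · ext <;> simp <;> omega
  have heval : ∀ s t : Fˣ, c (s, t)
      = ∑ j ∈ Finset.range (l+1), (P j).eval ↑s * (↑t : F)^j := by
    intro s t
    rw [← harepr, Finsupp.linearCombination_apply, Finsupp.sum, Finset.sum_apply]
    have hBox : a.support ⊆ (Finset.range (k+1) ×ˢ Finset.range (l+1)).image
        (fun ij : ℕ × ℕ => ((ij.1:ℤ), (ij.2:ℤ))) := by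
      intro m hm
      obtain ⟨i, j, hik, hjl, rfl⟩ := hsupp m hm
      exact Finset.mem_image.2 ⟨(i, j), Finset.mem_product.2
        ⟨Finset.mem_range.2 (by omega), Finset.mem_range.2 (by omega)⟩, rfl⟩
    rw [Finset.sum_subset hBox (by
      intro m _ hm
      rw [Finsupp.notMem_support_iff.1 hm, zero_smul]
      simp)]
    rw [Finset.sum_image (by
      intro x _ y _ hxy
      simp only [Prod.mk.injEq, Int.natCast_inj] at hxy
      exact Prod.ext hxy.1 hxy.2)]
    rw [Finset.sum_product]
    rw [Finset.sum_comm]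
    apply Finset.sum_congr rfl
    intro j _
    rw [hP]
    simp only [eval_finset_sum, eval_mul, eval_C, eval_pow, eval_X, Finset.sum_mul]
    apply Finset.sum_congr rfl
    intro i _
    simp only [Pi.smul_apply, smul_eq_mul, evalMonomial]
    rw [zpow_natCast, zpow_natCast, Units.val_pow_eq_pow_val, Units.val_pow_eq_pow_val]
    ring
  have hcoeffP : ∀ j i : ℕ, i ≤ k → (P j).coeff i = a ((i:ℤ), (j:ℤ)) := by
    intro j i hik
    rw [hP]
    simp only [finset_sum_coeff, coeff_C_mul, coeff_X_pow, mul_ite, mul_one, mul_zero]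
    rw [Finset.sum_ite_eq (Finset.range (k+1)) i (fun i' => a ((i':ℤ), (j:ℤ)))]
    simp [Nat.lt_succ_iff, hik]
  have hdegP : ∀ j : ℕ, (P j).natDegree ≤ k := by
    intro j
    apply Polynomial.natDegree_sum_le_of_forall_le
    intro i hi
    apply (Polynomial.natDegree_C_mul_le _ _).trans
    simp only [Polynomial.natDegree_X_pow]
    exact Nat.lt_succ_iff.1 (Finset.mem_range.1 hi)
  have hPmem : ∀ j : ℕ, j ≤ l → P j ≠ 0 → l * (P j).natDegree + k * j ≤ k * l := by
    intro j hjl hPj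
    have hlead : (P j).coeff (P j).natDegree ≠ 0 := by
      rw [← Polynomial.leadingCoeff]
      exact Polynomial.leadingCoeff_ne_zero.2 hPj
    rw [hcoeffP j _ (hdegP j)] at hlead
    have hmem : ((((P j).natDegree : ℕ):ℤ), ((j:ℕ):ℤ)) ∈ a.support :=
      Finsupp.mem_support_iff.2 hlead
    have h3 := (hS _ (haS hmem)).2.2
    simp only at h3
    exact_mod_cast h3
  set J : Finset ℕ := (Finset.range (l+1)).filter (fun j => P j ≠ 0) with hJ
  have hJne : J.Nonempty := by
    by_contra hJn
    apply hc0
    funext x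
    show c (x.1, x.2) = 0
    rw [heval]
    apply Finset.sum_eq_zero
    intro j hj
    have hPj : P j = 0 := by
      by_contra hne
      exact hJn ⟨j, Finset.mem_filter.2 ⟨hj, hne⟩⟩
    rw [hPj]
    simp
  set d : ℕ := J.max' hJne with hd
  have hdJ : d ∈ J := J.max'_mem hJne
  have hdl : d ≤ l := Nat.lt_succ_iff.1 (Finset.mem_range.1 (Finset.mem_filter.1 hdJ).1)
  have hPd : P d ≠ 0 := (Finset.mem_filter.1 hdJ).2
  have hPj0 : ∀ j : ℕ, d < j → j ≤ l → P j = 0 := by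
    intro j hdj hjl
    by_contra hne
    have : j ≤ d := Finset.le_max' J j
      (Finset.mem_filter.2 ⟨Finset.mem_range.2 (by omega), hne⟩)
    omega
  set a₀ : ℕ := (P d).natDegree with ha₀
  have hconstr : l * a₀ + k * d ≤ k * l := hPmem d hdl hPd
  set g : Fˣ → Polynomial F :=
    fun s => ∑ j ∈ Finset.range (l+1), C ((P j).eval ↑s) * X^j with hg
  have hgeval : ∀ s t : Fˣ, (g s).eval ↑t = c (s, t) := by
    intro s t
    rw [heval, hg]
    simp only [eval_finset_sum, eval_mul, eval_C, eval_pow, eval_X]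
  have hgcoeff : ∀ (s : Fˣ) (j : ℕ), j ≤ l → (g s).coeff j = (P j).eval ↑s := by
    intro s j hjl
    rw [hg]
    simp only [finset_sum_coeff, coeff_C_mul, coeff_X_pow, mul_ite, mul_one, mul_zero]
    rw [Finset.sum_ite_eq (Finset.range (l+1)) j (fun j' => (P j').eval ↑s)]
    simp [Nat.lt_succ_iff, hjl]
  have hgcoeff0 : ∀ (s : Fˣ) (j : ℕ), l < j → (g s).coeff j = 0 := by
    intro s j hjl
    rw [hg]
    simp only [finset_sum_coeff, coeff_C_mul, coeff_X_pow, mul_ite, mul_one, mul_zero]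
    rw [Finset.sum_ite_eq (Finset.range (l+1)) j (fun j' => (P j').eval ↑s)]
    simp [Nat.lt_succ_iff]
    omega
  have hgdeg : ∀ s : Fˣ, (g s).natDegree ≤ d := by
    intro s
    rw [Polynomial.natDegree_le_iff_coeff_eq_zero]
    intro N hN
    by_cases hNl : N ≤ l
    · rw [hgcoeff s N hNl, hPj0 N hN hNl]
      simp
    · exact hgcoeff0 s N (by omega)
  have hgne : ∀ s : Fˣ, (P d).eval ↑s ≠ 0 → g s ≠ 0 := by
    intro s hs hg0
    apply hs
    rw [← hgcoeff s d hdl, hg0]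
    simp
  have hcardU : Nat.card Fˣ = q - 1 := by
    rw [Nat.card_eq_fintype_card, Fintype.card_units, hF]
  have hwt : hammingWt c = ∑ s : Fˣ, {t : Fˣ | c (s, t) ≠ 0}.ncard := by
    have h0 : hammingWt c = {x : Fˣ × Fˣ | c (x.1, x.2) ≠ 0}.ncard := by
      unfold hammingWt; congr 1
    rw [h0]
    exact ncard_setOf_prod (fun s t => c (s, t) ≠ 0)
  have perS : ∀ s : Fˣ, (P d).eval ↑s ≠ 0 →
      (q-1) - d ≤ {t : Fˣ | c (s, t) ≠ 0}.ncard := by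
    intro s hs
    have hset : {t : Fˣ | c (s, t) ≠ 0} = {t : Fˣ | (g s).eval ↑t ≠ 0} := by
      ext t
      rw [Set.mem_setOf_eq, Set.mem_setOf_eq, hgeval]
    rw [hset]
    have := ncard_units_eval_ne_zero (g s) (hgne s hs) d (hgdeg s)
    rwa [hcardU] at this
  have hAcard : (q-1) - a₀ ≤ {s : Fˣ | (P d).eval ↑s ≠ 0}.ncard := by
    have := ncard_units_eval_ne_zero (P d) hPd a₀ le_rfl
    rwa [hcardU] at this
  set A : Set Fˣ := {s : Fˣ | (P d).eval ↑s ≠ 0} with hA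
  have hsum : A.ncard * ((q-1) - d) ≤ ∑ s : Fˣ, {t : Fˣ | c (s, t) ≠ 0}.ncard := by
    have hAfin : A.toFinset.card = A.ncard := (Set.ncard_eq_toFinset_card' A).symm
    calc A.ncard * ((q-1) - d)
        = ∑ _s ∈ A.toFinset, ((q-1) - d) := by
          rw [Finset.sum_const, smul_eq_mul, hAfin]
      _ ≤ ∑ s ∈ A.toFinset, {t : Fˣ | c (s, t) ≠ 0}.ncard :=
          Finset.sum_le_sum (fun s hs => perS s (Set.mem_toFinset.1 hs))
      _ ≤ ∑ s : Fˣ, {t : Fˣ | c (s, t) ≠ 0}.ncard :=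
          Finset.sum_le_sum_of_subset (Finset.subset_univ _)
  have hfinal : ((q-1) - a₀) * ((q-1) - d) ≤ hammingWt c := by
    rw [hwt]
    exact le_trans (Nat.mul_le_mul_right _ hAcard) hsum
  refine le_trans ?_ hfinal
  exact arith_key (q-1) k l a₀ d hconstr hdl hkq hlq hl

/-- the minimum distance of the toric code of the triangle
`conv{(0,0),(k,0),(0,l)}` over `𝔽_q` for positive `k, l ≤ q - 2` equals
`(q-1)² − m(q-1)` where `m = max{k,l}`. -/
theorem minDist_toricCode_triangle (q : ℕ) (hq : IsPrimePow q)
    (F : Type) [Field F] [Fintype F] (hF : Fintype.card F = q)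
    (k l : ℕ) (hk : 0 < k) (hl : 0 < l) (hkq : k ≤ q - 2) (hlq : l ≤ q - 2) :
    (minDist (toricCode F (latticePts {((0:ℤ),(0:ℤ)), ((k:ℤ),0), (0,(l:ℤ))})) : ℤ)
      = ((q:ℤ) - 1)^2 - (max k l : ℤ) * ((q:ℤ) - 1) := by
  classical
  have hq3 : 3 ≤ q := by omega
  have hq2 : 2 ≤ q := by omega
  set S : Set (ℤ × ℤ) := latticePts {((0:ℤ),(0:ℤ)), ((k:ℤ),0), (0,(l:ℤ))} with hSdef
  set N : ℕ := (q-1)*(q-1) - (max k l)*(q-1) with hN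
  -- existence of a codeword of weight N
  have hub : ∃ c ∈ toricCode F S, c ≠ 0 ∧ hammingWt c = N := by
    rcases le_total k l with h | h
    · obtain ⟨c, hmem, hc0, hwt⟩ := exists_codeword_axis F q l hF hlq hq2 S false
        (fun i hi => by
          simp only [Bool.false_eq_true, if_false]
          exact axisY_mem k l hl i hi)
      refine ⟨c, hmem, hc0, ?_⟩
      rw [hwt, hN, max_eq_right h, Nat.sub_mul, Nat.sub_mul, one_mul]
    · obtain ⟨c, hmem, hc0, hwt⟩ := exists_codeword_axis F q k hF hkq hq2 S true
        (fun i hi => by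
          simp only [if_true]
          exact axisX_mem k l hk i hi)
      refine ⟨c, hmem, hc0, ?_⟩
      rw [hwt, hN, max_eq_left h, Nat.sub_mul, Nat.sub_mul, one_mul]
  have hlb : ∀ c ∈ toricCode F S, c ≠ 0 → N ≤ hammingWt c := by
    intro c hmem hc0
    exact wt_lower q k l hF hk hl (by omega) (by omega) S
      (tri_latticePts_subset k l hk hl) c hmem hc0
  have hmain : minDist (toricCode F S) = N := by
    unfold minDist
    have hne : {w | ∃ c ∈ toricCode F S, c ≠ 0 ∧ hammingWt c = w}.Nonempty := by
      obtain ⟨c, hmem, hc0, hwt⟩ := hub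
      exact ⟨N, c, hmem, hc0, hwt⟩
    apply le_antisymm
    · obtain ⟨c, hmem, hc0, hwt⟩ := hub
      exact Nat.sInf_le ⟨c, hmem, hc0, hwt⟩
    · obtain ⟨c, hmem, hc0, hwt⟩ := Nat.sInf_mem hne
      rw [← hwt]
      exact hlb c hmem hc0
  rw [hmain, hN]
  have h1 : (max k l) * (q-1) ≤ (q-1)*(q-1) := Nat.mul_le_mul (by omega) le_rfl
  rw [Nat.cast_sub h1, Nat.cast_mul, Nat.cast_mul, Nat.cast_sub (by omega : 1 ≤ q)]
  push_cast
  ring
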